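/- Let N, M ≥ 1, let S ⊆ ℂ^N, let V ⊆ ℂ^N be open with S ⊆ V, and let F : V → ℂ^M be of class C² (over ℝ) and ∂̄-flat to order 2 on S, meaning: for every x ∈ S the conjugate-linear part N(x) of the real Fréchet derivative of F at x vanishes, and the real Fréchet derivative at x of the map x' ↦ N(x') vanishes. Let U ⊆ ℂ^M be open with F(S) ⊆ U, and let α : U → (ℂ^M →L[ℝ] ℂ) be a C¹ one-form that is asymptotically holomorphic on F(S), meaning: for every y ∈ F(S), (a) the conjugate-linear part α(y)^{0,1} vanishes, (b) the real Fréchet derivative at y of the map y' ↦ α(y')^{0,1} vanishes, and (c) for every w ∈ ℂ^M the real Fréchet derivative at y of the scalar function y' ↦ α(y')^{1,0}(w) is ℂ-linear. Then the pullback one-form (F*α)(x) := α(F(x)) ∘ (fderiv ℝ F x), defined on V, satisfies the same three conditions (a), (b), (c) at every point x ∈ S; that is, F*α is asymptotically holomorphic on S. -/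

import Mathlib

open Complex

/-- The conjugate-linear (i.e. `(0,1)`) part of a real-linear map `T` between complex
normed spaces: `T^{0,1}(v) = ½(T(v) + i·T(i·v))`. -/
noncomputable def conjLinearPart {E F : Type*}
    [NormedAddCommGroup E] [NormedSpace ℂ E] [NormedAddCommGroup F] [NormedSpace ℂ F]
    (T : E →L[ℝ] F) : E →L[ℝ] F :=
  (1 / 2 : ℝ) • (T + (Complex.I • ContinuousLinearMap.id ℝ F).comp
      (T.comp (Complex.I • ContinuousLinearMap.id ℝ E)))

set_option maxHeartbeats 1000000
set_option synthInstance.maxHeartbeats 400000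

section helpers

variable {E F : Type*}
    [NormedAddCommGroup E] [NormedSpace ℂ E] [NormedAddCommGroup F] [NormedSpace ℂ F]

lemma conjLinearPart_apply (T : E →L[ℝ] F) (v : E) :
    conjLinearPart T v = (1 / 2 : ℝ) • (T v + Complex.I • T (Complex.I • v)) := by
  simp [conjLinearPart]

lemma conjLinearPart_eq_zero_iff (T : E →L[ℝ] F) :
    conjLinearPart T = 0 ↔ ∀ v, T (Complex.I • v) = Complex.I • T v := by
  constructor
  · intro h v
    have h0 : T v + Complex.I • T (Complex.I • v) = 0 := by
      have h1 := congrArg (fun S : E →L[ℝ] F => S v) h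
      simp only [conjLinearPart_apply, ContinuousLinearMap.zero_apply] at h1
      have h2 := congrArg (fun z => (2 : ℝ) • z) h1
      simpa [smul_smul] using h2
    have h1 : Complex.I • (T v + Complex.I • T (Complex.I • v)) = 0 := by
      rw [h0, smul_zero]
    rw [smul_add, smul_smul, Complex.I_mul_I, neg_one_smul] at h1
    exact (add_neg_eq_zero.mp h1).symm
  · intro h
    ext v
    simp [conjLinearPart_apply, h v, smul_smul, Complex.I_mul_I]

variable (E F) in
/-- `conjLinearPart` as a continuous linear map on the space of real-linear maps. -/
noncomputable def conjLinearPartL : (E →L[ℝ] F) →L[ℝ] (E →L[ℝ] F) :=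
  (1 / 2 : ℝ) • (ContinuousLinearMap.id ℝ _ +
    (ContinuousLinearMap.compL ℝ E F F (Complex.I • ContinuousLinearMap.id ℝ F)).comp
      ((ContinuousLinearMap.compL ℝ E E F).flip (Complex.I • ContinuousLinearMap.id ℝ E)))

lemma conjLinearPartL_apply (T : E →L[ℝ] F) : conjLinearPartL E F T = conjLinearPart T := rfl

end helpers

/-- Lemma 3.2 (local model in `ℂ^N`): if `F : ℂ^N → ℂ^M` is `C²` and ∂̄-flat to order 2
on a set `S`, and `α` is a `C¹` one-form on a neighbourhood of `F(S)` that is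
asymptotically holomorphic on `F(S)`, then the pullback one-form `F*α` is asymptotically
holomorphic on `S`. -/
theorem pullback_asymptotically_holomorphic
    (N M : ℕ) (hN : 1 ≤ N) (hM : 1 ≤ M)
    (S : Set (Fin N → ℂ)) (V : Set (Fin N → ℂ)) (hV : IsOpen V) (hSV : S ⊆ V)
    (F : (Fin N → ℂ) → (Fin M → ℂ)) (hF : ContDiffOn ℝ 2 F V)
    -- `F` is ∂̄-flat to order 2 on `S`:
    (hflat₁ : ∀ x ∈ S, conjLinearPart (fderiv ℝ F x) = 0)
    (hflat₂ : ∀ x ∈ S, fderiv ℝ (fun x' => conjLinearPart (fderiv ℝ F x')) x = 0)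
    (U : Set (Fin M → ℂ)) (hU : IsOpen U) (hFS : F '' S ⊆ U)
    (α : (Fin M → ℂ) → ((Fin M → ℂ) →L[ℝ] ℂ)) (hα : ContDiffOn ℝ 1 α U)
    -- `α` is asymptotically holomorphic on `F(S)`:
    (ha : ∀ y ∈ F '' S, conjLinearPart (α y) = 0)
    (hb : ∀ y ∈ F '' S, fderiv ℝ (fun y' => conjLinearPart (α y')) y = 0)
    (hc : ∀ y ∈ F '' S, ∀ w : Fin M → ℂ, ∀ u : Fin M → ℂ,
      fderiv ℝ (fun y' => (α y' - conjLinearPart (α y')) w) y (Complex.I • u) =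
        Complex.I * fderiv ℝ (fun y' => (α y' - conjLinearPart (α y')) w) y u)
    -- the pullback one-form `F*α`:
    (β : (Fin N → ℂ) → ((Fin N → ℂ) →L[ℝ] ℂ))
    (hβ : β = fun x => (α (F x)).comp (fderiv ℝ F x)) :
    -- then `F*α` is asymptotically holomorphic on `S`:
    (∀ x ∈ S, conjLinearPart (β x) = 0) ∧
    (∀ x ∈ S, fderiv ℝ (fun x' => conjLinearPart (β x')) x = 0) ∧
    (∀ x ∈ S, ∀ w : Fin N → ℂ, ∀ u : Fin N → ℂ,
      fderiv ℝ (fun x' => (β x' - conjLinearPart (β x')) w) x (Complex.I • u) =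
        Complex.I * fderiv ℝ (fun x' => (β x' - conjLinearPart (β x')) w) x u) := by
  subst hβ
  have main : ∀ x ∈ S,
      conjLinearPart ((α (F x)).comp (fderiv ℝ F x)) = 0 ∧
      fderiv ℝ (fun x' => conjLinearPart ((α (F x')).comp (fderiv ℝ F x'))) x = 0 ∧
      (∀ w u : (Fin N → ℂ),
        fderiv ℝ (fun x' => ((α (F x')).comp (fderiv ℝ F x')
            - conjLinearPart ((α (F x')).comp (fderiv ℝ F x'))) w) x (Complex.I • u) =
          Complex.I * fderiv ℝ (fun x' => ((α (F x')).comp (fderiv ℝ F x')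
            - conjLinearPart ((α (F x')).comp (fderiv ℝ F x'))) w) x u) := by
    intro x hx
    have hxV : V ∈ nhds x := hV.mem_nhds (hSV hx)
    have hyFS : F x ∈ F '' S := ⟨x, hx, rfl⟩
    have hyU : U ∈ nhds (F x) := hU.mem_nhds (hFS hyFS)
    set y := F x with hy
    set D := fderiv ℝ F x with hD
    set D' := fderiv ℝ (fderiv ℝ F) x with hD'
    set A' := fderiv ℝ α y with hA'
    -- basic differentiability facts
    have hFc : ContDiffAt ℝ 2 F x := hF.contDiffAt hxV
    have hFx : HasFDerivAt F D x :=
      (hFc.differentiableAt (by norm_num)).hasFDerivAt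
    have hαy : HasFDerivAt α A' y :=
      ((hα.contDiffAt hyU).differentiableAt one_ne_zero).hasFDerivAt
    have hD1 : ContDiffOn ℝ 1 (fderiv ℝ F) V := hF.fderiv_of_isOpen hV (by norm_num)
    have hDx : HasFDerivAt (fderiv ℝ F) D' x :=
      ((hD1.contDiffAt hxV).differentiableAt one_ne_zero).hasFDerivAt
    have hA : HasFDerivAt (fun x' => α (F x')) (A'.comp D) x := hαy.comp x hFx
    set B : (Fin N → ℂ) →L[ℝ] ((Fin N → ℂ) →L[ℝ] ℂ) :=
      (ContinuousLinearMap.compL ℝ (Fin N → ℂ) (Fin M → ℂ) ℂ (α y)).comp D' +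
        ((ContinuousLinearMap.compL ℝ (Fin N → ℂ) (Fin M → ℂ) ℂ).flip D).comp (A'.comp D) with hB
    have hβx : HasFDerivAt (fun x' => (α (F x')).comp (fderiv ℝ F x')) B x :=
      hA.clm_comp hDx
    -- linearity facts
    have hDlin : ∀ v, D (Complex.I • v) = Complex.I • D v :=
      (conjLinearPart_eq_zero_iff D).mp (hflat₁ x hx)
    have hαlin : ∀ w, α y (Complex.I • w) = Complex.I • α y w :=
      (conjLinearPart_eq_zero_iff (α y)).mp (ha y hyFS)
    -- second order flatness: each D' u is complex linear
    have hPD : HasFDerivAt (fun x' => conjLinearPart (fderiv ℝ F x'))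
        ((conjLinearPartL (Fin N → ℂ) (Fin M → ℂ)).comp D') x :=
      (conjLinearPartL (Fin N → ℂ) (Fin M → ℂ)).hasFDerivAt.comp x hDx
    have hPD0 : (conjLinearPartL (Fin N → ℂ) (Fin M → ℂ)).comp D' = 0 := by
      rw [← hPD.fderiv]; exact hflat₂ x hx
    have hD'lin : ∀ u v, D' u (Complex.I • v) = Complex.I • D' u v := by
      intro u
      have : conjLinearPart (D' u) = 0 := by
        rw [← conjLinearPartL_apply]
        exact congrArg (fun T => T u) hPD0
      exact (conjLinearPart_eq_zero_iff (D' u)).mp this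
    -- first order asymptotic holomorphy of α : each A' v is complex linear
    have hPα : HasFDerivAt (fun y' => conjLinearPart (α y'))
        ((conjLinearPartL (Fin M → ℂ) ℂ).comp A') y :=
      (conjLinearPartL (Fin M → ℂ) ℂ).hasFDerivAt.comp y hαy
    have hPα0 : (conjLinearPartL (Fin M → ℂ) ℂ).comp A' = 0 := by
      rw [← hPα.fderiv]; exact hb y hyFS
    have hA'lin : ∀ v w, A' v (Complex.I • w) = Complex.I • A' v w := by
      intro v
      have : conjLinearPart (A' v) = 0 := by
        rw [← conjLinearPartL_apply]
        exact congrArg (fun T => T v) hPα0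
      exact (conjLinearPart_eq_zero_iff (A' v)).mp this
    -- condition (c) for α : v ↦ A' v w is complex linear
    have hA'c : ∀ v w, A' (Complex.I • v) w = Complex.I * A' v w := by
      intro v w
      have hsub : HasFDerivAt (fun y' => α y' - conjLinearPart (α y'))
          (A' - (conjLinearPartL (Fin M → ℂ) ℂ).comp A') y := hαy.sub hPα
      have happ : HasFDerivAt (fun y' => (α y' - conjLinearPart (α y')) w)
          ((α y - conjLinearPart (α y)).comp (0 : (Fin M → ℂ) →L[ℝ] (Fin M → ℂ)) +
            (A' - (conjLinearPartL (Fin M → ℂ) ℂ).comp A').flip w) y :=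
        hsub.clm_apply (hasFDerivAt_const w y)
      have hfd : fderiv ℝ (fun y' => (α y' - conjLinearPart (α y')) w) y =
          A'.flip w := by
        rw [happ.fderiv, hPα0]
        ext v'
        simp
      have := hc y hyFS w
      rw [hfd] at this
      simpa using this v
    -- symmetry of the second derivative of F
    have hsymm : ∀ u v : (Fin N → ℂ), D' u v = D' v u := by
      have h := hFc.isSymmSndFDerivAt (by simp [minSmoothness_of_isRCLikeNormedField])
      exact fun u v => h u v
    -- value of B
    have hBapp : ∀ u v, B u v = α y (D' u v) + A' (D u) (D v) := by
      intro u v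
      simp [hB, ContinuousLinearMap.compL_apply]
    have hPβ : HasFDerivAt
        (fun x' => conjLinearPart ((α (F x')).comp (fderiv ℝ F x')))
        ((conjLinearPartL (Fin N → ℂ) ℂ).comp B) x :=
      (conjLinearPartL (Fin N → ℂ) ℂ).hasFDerivAt.comp x hβx
    have hPβ0 : (conjLinearPartL (Fin N → ℂ) ℂ).comp B = 0 := by
      ext u : 1
      have : conjLinearPart (B u) = 0 := by
        rw [conjLinearPart_eq_zero_iff]
        intro v
        rw [hBapp u (Complex.I • v), hBapp u v, hD'lin, hDlin, hαlin, hA'lin, smul_add]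
      simpa [conjLinearPartL_apply] using this
    refine ⟨?_, ?_, ?_⟩
    · -- part (a)
      rw [conjLinearPart_eq_zero_iff]
      intro v
      simp only [ContinuousLinearMap.comp_apply, ← hD, ← hy, hDlin, hαlin]
    · -- part (b)
      rw [hPβ.fderiv]
      exact hPβ0
    · -- part (c)
      intro w u
      have hsub : HasFDerivAt
          (fun x' => (α (F x')).comp (fderiv ℝ F x')
            - conjLinearPart ((α (F x')).comp (fderiv ℝ F x')))
          (B - (conjLinearPartL (Fin N → ℂ) ℂ).comp B) x := hβx.sub hPβ
      have happ : HasFDerivAt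
          (fun x' => ((α (F x')).comp (fderiv ℝ F x')
            - conjLinearPart ((α (F x')).comp (fderiv ℝ F x'))) w)
          (((α (F x)).comp (fderiv ℝ F x)
              - conjLinearPart ((α (F x)).comp (fderiv ℝ F x))).comp
              (0 : (Fin N → ℂ) →L[ℝ] (Fin N → ℂ)) +
            (B - (conjLinearPartL (Fin N → ℂ) ℂ).comp B).flip w) x :=
        hsub.clm_apply (hasFDerivAt_const w x)
      have hfd : fderiv ℝ (fun x' => ((α (F x')).comp (fderiv ℝ F x')
          - conjLinearPart ((α (F x')).comp (fderiv ℝ F x'))) w) x = B.flip w := by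
        rw [happ.fderiv, hPβ0]
        ext v'
        simp
      rw [hfd, ContinuousLinearMap.flip_apply, ContinuousLinearMap.flip_apply]
      calc B (Complex.I • u) w
          = α y (D' (Complex.I • u) w) + A' (D (Complex.I • u)) (D w) := hBapp _ _
        _ = α y (D' w (Complex.I • u)) + A' (Complex.I • D u) (D w) := by
            rw [hsymm, hDlin]
        _ = Complex.I • α y (D' w u) + Complex.I * A' (D u) (D w) := by
            rw [hD'lin, hαlin, hA'c]
        _ = Complex.I * (α y (D' u w) + A' (D u) (D w)) := by
            rw [hsymm w u, smul_eq_mul]; ring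
        _ = Complex.I * B u w := by rw [hBapp]
  exact ⟨fun x hx => (main x hx).1, fun x hx => (main x hx).2.1, fun x hx => (main x hx).2.2⟩
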